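/- If 𝒟 is a symmetric (15,8,4)-design of type (C1), then the full automorphism group Aut(𝒟) is isomorphic to the general linear group GL(4, F₂). -/

import Mathlib

open Finset

/-- A symmetric (15,8,4)-design: 15 blocks, each an 8-element subset of `Fin 15`,
any two distinct blocks meeting in exactly 4 points. -/
def IsDesign (B : Finset (Finset (Fin 15))) : Prop :=
  B.card = 15 ∧ (∀ b ∈ B, b.card = 8) ∧
    ∀ b ∈ B, ∀ b' ∈ B, b ≠ b' → (b ∩ b').card = 4

private lemma exists_preimage' {β : Type*} [Finite β] {P : β → Prop} {F : β → β}
    (hF : Function.Injective F) (h : ∀ b, P b → P (F b)) {b : β} (hb : P b) :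
    ∃ b', P b' ∧ F b' = b := by
  have hGinj : Function.Injective (fun x : {x // P x} => (⟨F x.1, h _ x.2⟩ : {x // P x})) := by
    intro x y hxy
    exact Subtype.ext (hF (congrArg Subtype.val hxy))
  obtain ⟨x, hx⟩ := (Finite.injective_iff_surjective.mp hGinj) ⟨b, hb⟩
  exact ⟨x.1, x.2, congrArg Subtype.val hx⟩

/-- The full automorphism group of the design with block family `B`. -/
def designAut (B : Finset (Finset (Fin 15))) : Subgroup (Equiv.Perm (Fin 15)) where
  carrier := {σ | ∀ b ∈ B, b.image ⇑σ ∈ B}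
  one_mem' := by intro b hb; simpa using hb
  mul_mem' := by
    intro a c ha hc b hb
    have := ha _ (hc b hb)
    simpa [Finset.image_image, Equiv.Perm.coe_mul] using this
  inv_mem' := by
    intro σ hσ b hb
    obtain ⟨b', hb', hEq⟩ := exists_preimage' (F := fun s => Finset.image (⇑σ) s)
      (Finset.image_injective σ.injective) (fun s hs => hσ s hs) hb
    rw [← hEq, Finset.image_image]
    have : ⇑σ⁻¹ ∘ ⇑σ = id := by
      funext x; simp
    rw [this, Finset.image_id]
    exact hb'

/-- `O` is a center point of the block family `B`. -/
def IsCenter (B : Finset (Finset (Fin 15))) (O : Finset (Fin 15)) : Prop :=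
  O ∈ B ∧ ∀ b ∈ B, b ≠ O → symmDiff O b ∈ B

/-! ### Auxiliary material -/

private lemma zmod2_cases (x : ZMod 2) : x = 0 ∨ x = 1 := by revert x; decide
private lemma zmod2_ne_one {x : ZMod 2} (h : x ≠ 1) : x = 0 := by revert x h; decide

private lemma add_self_eq_zero' {V : Type} [AddCommGroup V] [Module (ZMod 2) V] (v : V) :
    v + v = 0 := by
  rw [← two_smul (ZMod 2), (by decide : (2 : ZMod 2) = 0), zero_smul]

/-- Indicator vector of a subset of `Fin 15`. -/
private def indv (s : Finset (Fin 15)) : Fin 15 → ZMod 2 := fun p => if p ∈ s then 1 else 0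

private lemma indv_eq_one {s : Finset (Fin 15)} {p : Fin 15} : indv s p = 1 ↔ p ∈ s := by
  unfold indv; split <;> simp_all

private lemma indv_add (s t : Finset (Fin 15)) : indv s + indv t = indv (symmDiff s t) := by
  funext p
  simp only [Pi.add_apply, indv, Finset.mem_symmDiff]
  by_cases hs : p ∈ s <;> by_cases ht : p ∈ t <;> simp [hs, ht] <;> decide

private lemma indv_inj : Function.Injective indv := by
  intro s t h
  ext p
  rw [← indv_eq_one, ← indv_eq_one, h]

private lemma indv_eq_zero {s : Finset (Fin 15)} : indv s = 0 ↔ s = ∅ := by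
  constructor
  · intro h; ext p
    have := congrFun h p
    simp only [indv, Pi.zero_apply] at this
    simp only [Finset.notMem_empty, iff_false]
    intro hp; rw [if_pos hp] at this; exact one_ne_zero this
  · intro h; subst h; funext p; simp [indv]

section FiberCounts

variable {V : Type} [AddCommGroup V] [Module (ZMod 2) V] [Fintype V]

private lemma fiber_card (f : V →ₗ[ZMod 2] ZMod 2) (hf : f ≠ 0) :
    2 * (univ.filter fun v => f v = 1).card = Fintype.card V := by
  classical
  obtain ⟨v₁, hv₁⟩ : ∃ v, f v = 1 := by
    by_contra h
    push_neg at h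
    exact hf (LinearMap.ext fun v => zmod2_ne_one (h v))
  have hbij : (univ.filter fun v => f v = 1).card = (univ.filter fun v => ¬ f v = 1).card := by
    apply Finset.card_nbij' (fun v => v + v₁) (fun v => v + v₁)
    · intro v hv
      simp only [Finset.mem_coe, mem_filter, mem_univ, true_and] at hv ⊢
      rw [map_add, hv, hv₁]; decide
    · intro v hv
      simp only [Finset.mem_coe, mem_filter, mem_univ, true_and] at hv ⊢
      rw [map_add, hv₁, zmod2_ne_one hv]; decide
    · intro v _; simp [add_assoc, add_self_eq_zero']
    · intro v _; simp [add_assoc, add_self_eq_zero']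
  have := Finset.card_filter_add_card_filter_not (s := univ)
    (p := fun v => f v = 1)
  rw [Finset.card_univ] at this
  omega

private lemma fiber_card_pair (f g : V →ₗ[ZMod 2] ZMod 2) (hf : f ≠ 0) (hg : g ≠ 0)
    (hfg : f ≠ g) :
    4 * (univ.filter fun v => f v = 1 ∧ g v = 1).card = Fintype.card V := by
  classical
  obtain ⟨v₀, hf0, hg1⟩ : ∃ v, f v = 0 ∧ g v = 1 := by
    by_contra h
    push_neg at h
    have hsub : (univ.filter fun v => ¬ f v = 1) ⊆ (univ.filter fun v => ¬ g v = 1) := by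
      intro v hv
      simp only [mem_filter, mem_univ, true_and] at hv ⊢
      intro hgv
      exact h v (zmod2_ne_one hv) hgv
    have h1 := Finset.card_filter_add_card_filter_not (s := univ)
      (p := fun v => f v = 1)
    have h2 := Finset.card_filter_add_card_filter_not (s := univ)
      (p := fun v => g v = 1)
    rw [Finset.card_univ] at h1 h2
    have hcf := fiber_card f hf
    have hcg := fiber_card g hg
    have heq : (univ.filter fun v => ¬ f v = 1) = (univ.filter fun v => ¬ g v = 1) :=
      Finset.eq_of_subset_of_card_le hsub (by omega)
    apply hfg
    ext v
    rcases zmod2_cases (f v) with h0 | h1'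
    · have : v ∈ (univ.filter fun v => ¬ f v = 1) := by simp [h0]
      rw [heq] at this
      simp only [mem_filter] at this
      rw [h0, zmod2_ne_one this.2]
    · have : v ∉ (univ.filter fun v => ¬ f v = 1) := by simp [h1']
      rw [heq] at this
      simp only [mem_filter, mem_univ, true_and, not_not] at this
      rw [h1', this]
  have hbij : (univ.filter fun v => f v = 1 ∧ g v = 1).card
      = (univ.filter fun v => f v = 1 ∧ ¬ g v = 1).card := by
    apply Finset.card_nbij' (fun v => v + v₀) (fun v => v + v₀)
    · intro v hv
      simp only [Finset.mem_coe, mem_filter, mem_univ, true_and] at hv ⊢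
      rw [map_add, map_add, hv.1, hv.2, hf0, hg1]
      constructor
      · decide
      · decide
    · intro v hv
      simp only [Finset.mem_coe, mem_filter, mem_univ, true_and] at hv ⊢
      rw [map_add, map_add, hv.1, hf0, zmod2_ne_one hv.2, hg1]
      constructor
      · decide
      · decide
    · intro v _; simp [add_assoc, add_self_eq_zero']
    · intro v _; simp [add_assoc, add_self_eq_zero']
  have hsplit : (univ.filter fun v => f v = 1 ∧ g v = 1).card
      + (univ.filter fun v => f v = 1 ∧ ¬ g v = 1).card
      = (univ.filter fun v => f v = 1).card := by
    rw [← Finset.filter_filter, ← Finset.filter_filter,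
      Finset.card_filter_add_card_filter_not]
  have := fiber_card f hf
  omega

end FiberCounts

/-! ### Double counting -/

private lemma sum_ind (b : Finset (Fin 15)) :
    ∑ p : Fin 15, (if p ∈ b then (1:ℕ) else 0) = b.card := by
  classical
  rw [← Finset.card_filter]
  congr 1
  simp [Finset.filter_univ_mem]

private lemma count_sum (B : Finset (Finset (Fin 15))) :
    ∑ p : Fin 15, (B.filter fun b => p ∈ b).card = ∑ b ∈ B, b.card := by
  classical
  have h1 : ∀ p : Fin 15, (B.filter fun b => p ∈ b).card = ∑ b ∈ B, if p ∈ b then 1 else 0 :=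
    fun p => Finset.card_filter _ _
  simp_rw [h1]
  rw [Finset.sum_comm]
  exact Finset.sum_congr rfl fun b _ => sum_ind b

private lemma count_sum_pairs (B : Finset (Finset (Fin 15))) :
    ∑ pq ∈ (univ ×ˢ univ : Finset (Fin 15 × Fin 15)),
      (B.filter fun b => pq.1 ∈ b ∧ pq.2 ∈ b).card = ∑ b ∈ B, b.card * b.card := by
  classical
  have h1 : ∀ pq : Fin 15 × Fin 15, (B.filter fun b => pq.1 ∈ b ∧ pq.2 ∈ b).card
      = ∑ b ∈ B, if pq.1 ∈ b ∧ pq.2 ∈ b then 1 else 0 := fun pq => Finset.card_filter _ _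
  simp_rw [h1]
  rw [Finset.sum_comm]
  refine Finset.sum_congr rfl fun b _ => ?_
  have h2 : ∀ pq : Fin 15 × Fin 15, (if pq.1 ∈ b ∧ pq.2 ∈ b then (1:ℕ) else 0)
      = (if pq.1 ∈ b then 1 else 0) * (if pq.2 ∈ b then 1 else 0) := by
    intro pq; by_cases ha : pq.1 ∈ b <;> by_cases hb : pq.2 ∈ b <;> simp [ha, hb]
  simp_rw [h2]
  rw [Finset.sum_product]
  simp only []
  rw [← Finset.sum_mul_sum univ univ (fun p => if p ∈ b then (1:ℕ) else 0)
    (fun q => if q ∈ b then (1:ℕ) else 0), sum_ind b]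

/-! ### The coordinate functionals -/

/-- Evaluation at a point, as a linear functional on a submodule of `Fin 15 → ZMod 2`. -/
private def chi (M : Submodule (ZMod 2) (Fin 15 → ZMod 2)) (p : Fin 15) :
    ↥M →ₗ[ZMod 2] ZMod 2 :=
  (LinearMap.proj p).comp M.subtype

private lemma chi_apply (M : Submodule (ZMod 2) (Fin 15 → ZMod 2)) (p : Fin 15) (m : ↥M) :
    chi M p m = m.1 p := rfl

private lemma bridge (B : Finset (Finset (Fin 15))) (M : Submodule (ZMod 2) (Fin 15 → ZMod 2))
    [Fintype ↥M]
    (hMB : ∀ b ∈ B, indv b ∈ M) (hBM : ∀ x : ↥M, x ≠ 0 → ∃ b ∈ B, indv b = x.1)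
    (P : (Fin 15 → ZMod 2) → Prop) [DecidablePred P] (hP0 : ¬ P 0) :
    (B.filter fun b => P (indv b)).card = (univ.filter fun m : ↥M => P m.1).card := by
  classical
  apply Finset.card_bij
    (fun b hb => (⟨indv b, hMB b (Finset.mem_filter.mp hb).1⟩ : ↥M))
  · intro b hb
    simp only [Finset.mem_filter, Finset.mem_univ, true_and] at hb ⊢
    exact hb.2
  · intro b hb b' hb' h
    exact indv_inj (congrArg Subtype.val h)
  · intro m hm
    simp only [Finset.mem_filter, Finset.mem_univ, true_and] at hm
    have hm0 : m ≠ 0 := by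
      rintro rfl
      exact hP0 hm
    obtain ⟨b, hbB, hbe⟩ := hBM m hm0
    exact ⟨b, Finset.mem_filter.mpr ⟨hbB, by rw [hbe]; exact hm⟩, Subtype.ext hbe⟩

private lemma chi_props (B : Finset (Finset (Fin 15)))
    (M : Submodule (ZMod 2) (Fin 15 → ZMod 2)) [Fintype ↥M]
    (hD : IsDesign B)
    (hMB : ∀ b ∈ B, indv b ∈ M) (hBM : ∀ x : ↥M, x ≠ 0 → ∃ b ∈ B, indv b = x.1)
    (hcard : Fintype.card ↥M = 16) :
    (∀ p, chi M p ≠ 0) ∧ Function.Injective (chi M) := by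
  classical
  obtain ⟨hB15, hBcard, -⟩ := hD
  have hdeg : ∀ p : Fin 15, (B.filter fun b => p ∈ b).card
      = (univ.filter fun m : ↥M => chi M p m = 1).card := by
    intro p
    have : (B.filter fun b => p ∈ b) = (B.filter fun b => (indv b) p = 1) := by
      apply Finset.filter_congr
      intro b _
      simp [indv_eq_one]
    rw [this]
    exact bridge B M hMB hBM (fun x => x p = 1) (by simp)
  have hdeg8 : ∀ p : Fin 15, chi M p ≠ 0 →
      (B.filter fun b => p ∈ b).card = 8 := by
    intro p hp
    have := fiber_card (chi M p) hp
    rw [hcard] at this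
    rw [hdeg p]
    omega
  have hdeg0 : ∀ p : Fin 15, chi M p = 0 → (B.filter fun b => p ∈ b).card = 0 := by
    intro p hp
    rw [hdeg p]
    rw [Finset.card_eq_zero]
    apply Finset.filter_false_of_mem
    intro m _
    rw [hp]
    simp
  have hdegle : ∀ p : Fin 15, (B.filter fun b => p ∈ b).card ≤ 8 := by
    intro p
    by_cases hp : chi M p = 0
    · rw [hdeg0 p hp]; omega
    · rw [hdeg8 p hp]
  have hsum : ∑ p : Fin 15, (B.filter fun b => p ∈ b).card = 120 := by
    rw [count_sum B]
    rw [Finset.sum_congr rfl (fun b hb => hBcard b hb)]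
    simp [hB15]
  -- every point is in some block
  have hne : ∀ p, chi M p ≠ 0 := by
    intro p₀ hp₀
    have h1 : ∑ p ∈ (univ : Finset (Fin 15)).erase p₀, (B.filter fun b => p ∈ b).card
        ≤ 14 * 8 := by
      calc ∑ p ∈ (univ : Finset (Fin 15)).erase p₀, (B.filter fun b => p ∈ b).card
          ≤ ((univ : Finset (Fin 15)).erase p₀).card * 8 :=
            Finset.sum_le_card_nsmul _ _ 8 (fun p _ => hdegle p)
        _ = 14 * 8 := by rw [Finset.card_erase_of_mem (mem_univ _), Finset.card_univ]; simp
    have h2 : (B.filter fun b => p₀ ∈ b).card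
        + ∑ p ∈ (univ : Finset (Fin 15)).erase p₀, (B.filter fun b => p ∈ b).card = 120 := by
      rw [← hsum]
      exact Finset.add_sum_erase (univ : Finset (Fin 15))
        (fun p => (B.filter fun b => p ∈ b).card) (mem_univ p₀)
    have h3 := hdeg0 p₀ hp₀
    omega
  refine ⟨hne, ?_⟩
  -- pair counting
  have hpair : ∀ r s : Fin 15, (B.filter fun b => r ∈ b ∧ s ∈ b).card
      = (univ.filter fun m : ↥M => chi M r m = 1 ∧ chi M s m = 1).card := by
    intro r s
    have : (B.filter fun b => r ∈ b ∧ s ∈ b)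
        = (B.filter fun b => (indv b) r = 1 ∧ (indv b) s = 1) := by
      apply Finset.filter_congr
      intro b _
      simp [indv_eq_one]
    rw [this]
    exact bridge B M hMB hBM (fun x => x r = 1 ∧ x s = 1) (by simp)
  have hpairval : ∀ r s : Fin 15, r ≠ s →
      (B.filter fun b => r ∈ b ∧ s ∈ b).card = if chi M r = chi M s then 8 else 4 := by
    intro r s hrs
    rw [hpair r s]
    split
    · next h =>
      have : (univ.filter fun m : ↥M => chi M r m = 1 ∧ chi M s m = 1)
          = (univ.filter fun m : ↥M => chi M r m = 1) := by
        apply Finset.filter_congr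
        intro m _
        rw [← h]
        simp
      rw [this]
      have := fiber_card (chi M r) (hne r)
      rw [hcard] at this
      omega
    · next h =>
      have := fiber_card_pair (chi M r) (chi M s) (hne r) (hne s) h
      rw [hcard] at this
      omega
  -- total pair count
  have htot : ∑ pq ∈ (univ ×ˢ univ : Finset (Fin 15 × Fin 15)),
      (B.filter fun b => pq.1 ∈ b ∧ pq.2 ∈ b).card = 960 := by
    rw [count_sum_pairs B]
    rw [Finset.sum_congr rfl (fun b hb => by rw [hBcard b hb])]
    simp [hB15]
  -- split into diagonal and off-diagonal
  have hsplit : ∑ pq ∈ (univ : Finset (Fin 15)).diag,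
        (B.filter fun b => pq.1 ∈ b ∧ pq.2 ∈ b).card
      + ∑ pq ∈ (univ : Finset (Fin 15)).offDiag,
        (B.filter fun b => pq.1 ∈ b ∧ pq.2 ∈ b).card = 960 := by
    rw [← Finset.sum_union (Finset.disjoint_diag_offDiag _), Finset.diag_union_offDiag]
    exact htot
  have hdiag : ∑ pq ∈ (univ : Finset (Fin 15)).diag,
      (B.filter fun b => pq.1 ∈ b ∧ pq.2 ∈ b).card = 120 := by
    have hrw : ∑ pq ∈ (univ : Finset (Fin 15)).diag,
        (B.filter fun b => pq.1 ∈ b ∧ pq.2 ∈ b).card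
        = ∑ p : Fin 15, (B.filter fun b => p ∈ b ∧ p ∈ b).card := by
      apply Finset.sum_nbij' (fun pq => pq.1) (fun a => (a, a))
      · intro pq hpq; exact mem_univ _
      · intro a _; rw [Finset.mem_diag]; exact ⟨mem_univ _, rfl⟩
      · intro pq hpq
        rw [Finset.mem_diag] at hpq
        exact Prod.ext rfl hpq.2
      · intro a _; rfl
      · intro pq hpq
        rw [Finset.mem_diag] at hpq
        rw [← hpq.2]
    rw [hrw]
    have : ∀ p : Fin 15, (B.filter fun b => p ∈ b ∧ p ∈ b).card
        = (B.filter fun b => p ∈ b).card := by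
      intro p
      apply congrArg Finset.card
      apply Finset.filter_congr
      intro b _
      simp
    rw [Finset.sum_congr rfl (fun p _ => this p)]
    exact hsum
  have hoff : ∑ pq ∈ (univ : Finset (Fin 15)).offDiag,
      (B.filter fun b => pq.1 ∈ b ∧ pq.2 ∈ b).card = 840 := by omega
  -- injectivity
  intro p q hpq
  by_contra hne'
  have hlt : ∑ pq ∈ (univ : Finset (Fin 15)).offDiag, 4
      < ∑ pq ∈ (univ : Finset (Fin 15)).offDiag,
          (B.filter fun b => pq.1 ∈ b ∧ pq.2 ∈ b).card := by
    apply Finset.sum_lt_sum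
    · intro i hi
      rw [Finset.mem_offDiag] at hi
      rw [hpairval i.1 i.2 hi.2.2]
      split <;> omega
    · refine ⟨(p, q), ?_, ?_⟩
      · rw [Finset.mem_offDiag]
        exact ⟨mem_univ _, mem_univ _, hne'⟩
      · rw [hpairval p q hne', if_pos hpq]
        omega
  have hconst : ∑ _pq ∈ (univ : Finset (Fin 15)).offDiag, 4 = 840 := by
    rw [Finset.sum_const, Finset.offDiag_card, Finset.card_univ]
    simp
  omega

/-! ### The automorphism-to-linear-map homomorphism -/

private def Phi (B : Finset (Finset (Fin 15))) (M : Submodule (ZMod 2) (Fin 15 → ZMod 2))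
    (hcomp : ∀ σ ∈ designAut B, ∀ x ∈ M, x ∘ ⇑(σ.symm) ∈ M) :
    ↥(designAut B) →* (↥M ≃ₗ[ZMod 2] ↥M) :=
  MonoidHom.mk'
    (fun σ =>
      { toFun := fun m => ⟨m.1 ∘ ⇑(σ.1.symm), hcomp σ.1 σ.2 m.1 m.2⟩
        invFun := fun m => ⟨m.1 ∘ ⇑σ.1, hcomp (σ⁻¹).1 (σ⁻¹).2 m.1 m.2⟩
        left_inv := by
          intro m
          apply Subtype.ext
          funext p
          simp
        right_inv := by
          intro m
          apply Subtype.ext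
          funext p
          simp
        map_add' := by
          intro m m'
          apply Subtype.ext
          rfl
        map_smul' := by
          intro c m
          apply Subtype.ext
          rfl })
    (by
      intro σ τ
      apply LinearEquiv.toLinearMap_injective
      apply LinearMap.ext
      intro m
      apply Subtype.ext
      rfl)

private lemma Phi_apply (B : Finset (Finset (Fin 15))) (M : Submodule (ZMod 2) (Fin 15 → ZMod 2))
    (hcomp : ∀ σ ∈ designAut B, ∀ x ∈ M, x ∘ ⇑(σ.symm) ∈ M)
    (σ : ↥(designAut B)) (m : ↥M) :
    ((Phi B M hcomp σ m : ↥M) : Fin 15 → ZMod 2) = m.1 ∘ ⇑(σ.1.symm) := rfl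

/-- Conjugating linear automorphism groups by a linear equivalence. -/
private def autCongr {V W : Type} [AddCommGroup V] [AddCommGroup W]
    [Module (ZMod 2) V] [Module (ZMod 2) W] (e : V ≃ₗ[ZMod 2] W) :
    (V ≃ₗ[ZMod 2] V) ≃* (W ≃ₗ[ZMod 2] W) where
  toFun g := (e.symm.trans g).trans e
  invFun g := (e.trans g).trans e.symm
  left_inv g := by
    apply LinearEquiv.toLinearMap_injective
    apply LinearMap.ext
    intro x
    simp
  right_inv g := by
    apply LinearEquiv.toLinearMap_injective
    apply LinearMap.ext
    intro x
    simp
  map_mul' g h := by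
    apply LinearEquiv.toLinearMap_injective
    apply LinearMap.ext
    intro x
    simp [LinearEquiv.trans_apply]

/-! ### Main theorem -/

set_option maxHeartbeats 2000000 in
set_option synthInstance.maxHeartbeats 400000 in
theorem stmt0 (B : Finset (Finset (Fin 15))) (hD : IsDesign B)
    (hC1 : ∀ b ∈ B, IsCenter B b) :
    Nonempty (↥(designAut B) ≃* Matrix.GeneralLinearGroup (Fin 4) (ZMod 2)) := by
  classical
  obtain ⟨hB15, hBcard, hBint⟩ := hD
  have hBne : ∀ b ∈ B, indv b ≠ 0 := by
    intro b hb h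
    have := indv_eq_zero.mp h
    subst this
    simpa using hBcard _ hb
  -- the submodule of indicator vectors
  have hadd : ∀ x ∈ insert (0 : Fin 15 → ZMod 2) (B.image indv),
      ∀ y ∈ insert (0 : Fin 15 → ZMod 2) (B.image indv),
      x + y ∈ insert (0 : Fin 15 → ZMod 2) (B.image indv) := by
    intro x hx y hy
    simp only [Finset.mem_insert, Finset.mem_image] at hx hy ⊢
    rcases hx with rfl | ⟨b, hb, rfl⟩
    · simpa using hy
    rcases hy with rfl | ⟨b', hb', rfl⟩
    · rw [add_zero]
      exact Or.inr ⟨b, hb, rfl⟩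
    by_cases hbb : b = b'
    · subst hbb
      left
      exact add_self_eq_zero' _
    · right
      refine ⟨symmDiff b b', ?_, (indv_add b b').symm⟩
      exact (hC1 b hb).2 b' hb' (Ne.symm hbb)
  let M : Submodule (ZMod 2) (Fin 15 → ZMod 2) :=
    { carrier := ↑(insert (0 : Fin 15 → ZMod 2) (B.image indv))
      add_mem' := fun {a b} ha hb => hadd a ha b hb
      zero_mem' := by simp
      smul_mem' := by
        intro c x hx
        rcases zmod2_cases c with h | h <;> subst h
        · simpa using Finset.mem_insert_self _ _
        · simpa using hx }
  have hmem : ∀ x, x ∈ M ↔ x ∈ insert (0 : Fin 15 → ZMod 2) (B.image indv) := fun x => Iff.rfl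
  have hMB : ∀ b ∈ B, indv b ∈ M := by
    intro b hb
    rw [hmem]
    exact Finset.mem_insert_of_mem (Finset.mem_image_of_mem _ hb)
  have hBM : ∀ x : ↥M, x ≠ 0 → ∃ b ∈ B, indv b = x.1 := by
    intro x hx
    have := (hmem x.1).mp x.2
    rcases Finset.mem_insert.mp this with h | h
    · exact absurd (Subtype.ext h) hx
    · obtain ⟨b, hb, he⟩ := Finset.mem_image.mp h
      exact ⟨b, hb, he⟩
  haveI : Fintype ↥M := Fintype.ofFinite _
  have hcard : Fintype.card ↥M = 16 := by
    have h0 : (0 : Fin 15 → ZMod 2) ∉ B.image indv := by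
      rw [Finset.mem_image]
      rintro ⟨b, hb, he⟩
      exact hBne b hb he
    have hc : (insert (0 : Fin 15 → ZMod 2) (B.image indv)).card = 16 := by
      rw [Finset.card_insert_of_notMem h0, Finset.card_image_of_injective _ indv_inj, hB15]
    have : Fintype.card ↥M
        = Fintype.card (insert (0 : Fin 15 → ZMod 2) (B.image indv) : Finset _) := by
      apply Fintype.card_congr
      exact Equiv.subtypeEquivRight (fun x => hmem x)
    rw [this, Fintype.card_coe]
    exact hc
  obtain ⟨hne, hinj⟩ := chi_props B M ⟨hB15, hBcard, hBint⟩ hMB hBM hcard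
  -- dimension
  haveI : FiniteDimensional (ZMod 2) ↥M := Module.Finite.of_finite
  have hfr : Module.finrank (ZMod 2) ↥M = 4 := by
    have := Module.card_eq_pow_finrank (K := ZMod 2) (V := ↥M)
    rw [hcard, ZMod.card 2] at this
    have h4 : (16 : ℕ) = 2 ^ 4 := by norm_num
    rw [h4] at this
    exact (Nat.pow_right_injective (le_refl 2) this.symm)
  -- the dual space and the bijection χe
  haveI : Finite (Module.Dual (ZMod 2) ↥M) :=
    Finite.of_injective _ (DFunLike.coe_injective (F := Module.Dual (ZMod 2) ↥M))
  haveI : Fintype (Module.Dual (ZMod 2) ↥M) := Fintype.ofFinite _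
  have hcardD : Fintype.card (Module.Dual (ZMod 2) ↥M) = 16 := by
    have := Module.card_eq_pow_finrank (K := ZMod 2) (V := Module.Dual (ZMod 2) ↥M)
    rw [ZMod.card 2, Subspace.dual_finrank_eq, hfr] at this
    rw [this]
    norm_num
  have hcardD' : Fintype.card {f : Module.Dual (ZMod 2) ↥M // f ≠ 0} = 15 := by
    have h1 : Fintype.card {f : Module.Dual (ZMod 2) ↥M // f = 0} = 1 :=
      Fintype.card_subtype_eq 0
    have h2 := Fintype.card_subtype_compl (p := fun f : Module.Dual (ZMod 2) ↥M => f = 0)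
    rw [hcardD, h1] at h2
    simpa using h2
  have hbij : Function.Bijective
      (fun p => (⟨chi M p, hne p⟩ : {f : Module.Dual (ZMod 2) ↥M // f ≠ 0})) := by
    rw [Fintype.bijective_iff_injective_and_card]
    constructor
    · intro p q h
      exact hinj (congrArg Subtype.val h)
    · rw [hcardD']
      simp
  let χe := Equiv.ofBijective _ hbij
  have hχe : ∀ p, (χe p).1 = chi M p := fun p => rfl
  -- images of blocks under permutations
  have hindcomp : ∀ (σ : Equiv.Perm (Fin 15)) (b : Finset (Fin 15)),
      indv (b.image ⇑σ) = indv b ∘ ⇑σ.symm := by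
    intro σ b
    funext q
    simp only [Function.comp_apply, indv]
    congr 1
    simp only [Finset.mem_image, eq_iff_iff]
    constructor
    · rintro ⟨a, ha, rfl⟩
      simpa using ha
    · intro h
      exact ⟨σ.symm q, h, by simp⟩
  have hcomp : ∀ σ ∈ designAut B, ∀ x ∈ M, x ∘ ⇑(σ.symm) ∈ M := by
    intro σ hσ x hx
    rcases Finset.mem_insert.mp ((hmem x).mp hx) with h | h
    · subst h
      have : (0 : Fin 15 → ZMod 2) ∘ ⇑σ.symm = 0 := rfl
      rw [this]
      exact M.zero_mem
    · obtain ⟨b, hb, rfl⟩ := Finset.mem_image.mp h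
      rw [← hindcomp]
      exact hMB _ (hσ b hb)
  let Φ := Phi B M hcomp
  -- Φ is injective
  have hΦinj : Function.Injective Φ := by
    intro σ τ h
    have key : ∀ (σ τ : ↥(designAut B)), Φ σ = Φ τ →
        ∀ p, σ.1.symm p = τ.1.symm p := by
      intro σ τ h p
      apply hinj
      apply LinearMap.ext
      intro m
      have h1 := congrFun (congrArg (fun (g : ↥M ≃ₗ[ZMod 2] ↥M) => ((g m : ↥M) : Fin 15 → ZMod 2))
        h) p
      exact h1
    apply Subtype.ext
    apply Equiv.ext
    intro p
    have hkey := key σ τ h (σ.1 p)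
    have h2 : τ.1.symm (σ.1 p) = p := by rw [← hkey]; simp
    calc σ.1 p = τ.1 (τ.1.symm (σ.1 p)) := by simp
      _ = τ.1 p := by rw [h2]
  -- Φ is surjective
  have hcompdual : ∀ (τ : ↥M ≃ₗ[ZMod 2] ↥M) (f : Module.Dual (ZMod 2) ↥M), f ≠ 0 →
      f ∘ₗ (τ : ↥M →ₗ[ZMod 2] ↥M) ≠ 0 := by
    intro τ f hf hc
    apply hf
    apply LinearMap.ext
    intro m
    have := LinearMap.congr_fun hc (τ.symm m)
    simpa using this
  have hΦsurj : Function.Surjective Φ := by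
    intro ρ
    set F : Fin 15 → Fin 15 := fun p =>
      χe.symm ⟨chi M p ∘ₗ (ρ.symm : ↥M →ₗ[ZMod 2] ↥M), hcompdual ρ.symm _ (hne p)⟩ with hF
    set G : Fin 15 → Fin 15 := fun q =>
      χe.symm ⟨chi M q ∘ₗ (ρ : ↥M →ₗ[ZMod 2] ↥M), hcompdual ρ _ (hne q)⟩ with hG
    have keyF : ∀ p, chi M (F p) = chi M p ∘ₗ (ρ.symm : ↥M →ₗ[ZMod 2] ↥M) := by
      intro p
      have := χe.apply_symm_apply ⟨chi M p ∘ₗ (ρ.symm : ↥M →ₗ[ZMod 2] ↥M),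
        hcompdual ρ.symm _ (hne p)⟩
      exact congrArg Subtype.val this
    have keyG : ∀ q, chi M (G q) = chi M q ∘ₗ (ρ : ↥M →ₗ[ZMod 2] ↥M) := by
      intro q
      have := χe.apply_symm_apply ⟨chi M q ∘ₗ (ρ : ↥M →ₗ[ZMod 2] ↥M),
        hcompdual ρ _ (hne q)⟩
      exact congrArg Subtype.val this
    have hGF : ∀ p, G (F p) = p := by
      intro p
      have h1 : chi M (G (F p)) = chi M p := by
        rw [keyG, keyF]
        apply LinearMap.ext
        intro m
        simp
      exact hinj h1
    have hFG : ∀ q, F (G q) = q := by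
      intro q
      have h1 : chi M (F (G q)) = chi M q := by
        rw [keyF, keyG]
        apply LinearMap.ext
        intro m
        simp
      exact hinj h1
    set σ : Equiv.Perm (Fin 15) := ⟨F, G, hGF, hFG⟩ with hσdef
    -- membership criterion
    have hmemcrit : ∀ (b : Finset (Fin 15)) (hb : b ∈ B) (p : Fin 15),
        p ∈ b ↔ chi M p ⟨indv b, hMB b hb⟩ = 1 := by
      intro b hb p
      rw [chi_apply]
      exact indv_eq_one.symm
    have hAut : σ ∈ designAut B := by
      intro b hb
      set m : ↥M := ⟨indv b, hMB b hb⟩ with hm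
      have hm0 : ρ m ≠ 0 := by
        intro h
        have : m = 0 := by
          have := congrArg ρ.symm h
          simpa using this
        exact hBne b hb (congrArg Subtype.val this)
      obtain ⟨b', hb', hbe⟩ := hBM (ρ m) hm0
      have himg : b.image ⇑σ = b' := by
        ext q
        rw [Finset.mem_image]
        constructor
        · rintro ⟨p, hp, rfl⟩
          rw [hmemcrit b' hb']
          have : chi M (σ p) (ρ m) = chi M p m := by
            show chi M (F p) (ρ m) = chi M p m
            rw [keyF]
            simp
          have hpm := (hmemcrit b hb p).mp hp
          rw [show (⟨indv b', hMB b' hb'⟩ : ↥M) = ρ m from Subtype.ext hbe]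
          rw [this]
          exact hpm
        · intro hq
          refine ⟨G q, ?_, hFG q⟩
          rw [hmemcrit b hb]
          have h1 : chi M (G q) m = chi M q (ρ m) := by
            rw [keyG]
            simp
          rw [h1]
          have := (hmemcrit b' hb' q).mp hq
          rwa [show (⟨indv b', hMB b' hb'⟩ : ↥M) = ρ m from Subtype.ext hbe] at this
      rw [himg]
      exact hb'
    refine ⟨⟨σ, hAut⟩, ?_⟩
    apply LinearEquiv.toLinearMap_injective
    apply LinearMap.ext
    intro m
    apply Subtype.ext
    funext q
    have h1 : ((Φ ⟨σ, hAut⟩ m : ↥M) : Fin 15 → ZMod 2) q = m.1 (σ.symm q) := rfl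
    have h2 : σ.symm q = G q := rfl
    have h3 : m.1 (G q) = chi M (G q) m := rfl
    rw [LinearEquiv.coe_coe, h1, h2, h3, keyG]
    simp
    rfl
  -- assemble the final equivalence
  have e1 : ↥(designAut B) ≃* (↥M ≃ₗ[ZMod 2] ↥M) := MulEquiv.ofBijective Φ ⟨hΦinj, hΦsurj⟩
  obtain ⟨e2⟩ : Nonempty (↥M ≃ₗ[ZMod 2] (Fin 4 → ZMod 2)) := by
    apply FiniteDimensional.nonempty_linearEquiv_of_finrank_eq
    rw [hfr, Module.finrank_fin_fun]
  exact ⟨e1.trans ((autCongr e2).trans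
    ((LinearMap.GeneralLinearGroup.generalLinearEquiv (ZMod 2) (Fin 4 → ZMod 2)).symm.trans
      (Matrix.GeneralLinearGroup.toLin).symm))⟩
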